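/- Let f : A ⥤ B be an isofibration of categories (every isomorphism b ≅ f a in B lifts to an isomorphism in A with codomain a). If α : g ⟶ h is a natural transformation between functors g, h : X ⥤ A such that f applied to α (the whiskered transformation whiskerRight α f) is a natural isomorphism, then α factors as α = σ ∘ τ where σ is a natural isomorphism and τ is f-vertical (i.e. whiskerRight τ f is the identity transformation). -/

import Mathlib

open CategoryTheory

universe v₁ v₂ v₃ u₁ u₂ u₃

/-- A functor `f` is an isofibration if every isomorphism `β : b ≅ f a` in `B` lifts to an
isomorphism `σ : a' ≅ a` in `A` with `f a' = b` and `f σ = β` (modulo the identification). -/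
def IsIsofibration {A : Type u₁} {B : Type u₂} [Category.{v₁} A] [Category.{v₂} B]
    (f : A ⥤ B) : Prop :=
  ∀ (a : A) (b : B) (β : b ≅ f.obj a),
    ∃ (a' : A) (σ : a' ≅ a) (h : f.obj a' = b),
      f.map σ.hom = eqToHom h ≫ β.hom

/-- If `f` is an isofibration and `α : g ⟶ h` is a natural transformation whose whiskering with
`f` is a natural isomorphism, then `α = τ ≫ σ` with `σ` a natural isomorphism and
`τ` `f`-vertical (its whiskering with `f` is an identity). -/
theorem stmt0 {A : Type u₁} {B : Type u₂} {X : Type u₃}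
    [Category.{v₁} A] [Category.{v₂} B] [Category.{v₃} X]
    (f : A ⥤ B) (hf : IsIsofibration f) (g h : X ⥤ A) (α : g ⟶ h)
    (hα : IsIso (Functor.whiskerRight α f)) :
    ∃ (m : X ⥤ A) (τ : g ⟶ m) (σ : m ⟶ h),
      α = τ ≫ σ ∧ IsIso σ ∧
        ∃ (w : g ⋙ f = m ⋙ f), Functor.whiskerRight τ f = eqToHom w := by
  -- componentwise isos
  haveI : ∀ x : X, IsIso (f.map (α.app x)) := fun x =>
    (inferInstance : IsIso ((Functor.whiskerRight α f).app x))
  -- choose lifts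
  choose obj σ hobj hmap using fun x : X =>
    hf (h.obj x) (f.obj (g.obj x)) (asIso (f.map (α.app x)))
  -- the functor m
  let m : X ⥤ A :=
    { obj := obj
      map := fun {x y} u => (σ x).hom ≫ h.map u ≫ (σ y).inv
      map_id := fun x => by simp
      map_comp := fun u v => by simp }
  refine ⟨m, ⟨fun x => α.app x ≫ (σ x).inv, ?_⟩, ⟨fun x => (σ x).hom, ?_⟩, ?_, ?_, ?_, ?_⟩
  · intro x y u
    simp only [m]
    slice_lhs 1 2 => rw [α.naturality]
    simp
  · intro x y u
    simp [m]
  · ext x; simp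
  · exact NatIso.isIso_of_isIso_app _
  · have hinv : ∀ x, f.map (σ x).inv = inv (f.map (α.app x)) ≫ eqToHom (hobj x).symm := by
      intro x
      rw [← IsIso.Iso.inv_hom, Functor.map_inv]
      apply IsIso.inv_eq_of_hom_inv_id
      rw [hmap x]; simp
    refine CategoryTheory.Functor.ext (fun x => (hobj x).symm) (fun x y u => ?_)
    have hx := hmap x
    simp only [asIso_hom] at hx
    simp only [Functor.comp_map, m, Functor.map_comp, hx, hinv, eqToHom_trans,
      eqToHom_refl, Category.assoc, Category.comp_id, Category.id_comp]
    rw [eqToHom_trans_assoc, eqToHom_refl, Category.id_comp, ← Category.assoc,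
      ← Functor.map_comp, ← NatTrans.naturality, Functor.map_comp]
    simp
  · ext x
    have hinv : f.map (σ x).inv = inv (f.map (α.app x)) ≫ eqToHom (hobj x).symm := by
      rw [← IsIso.Iso.inv_hom, Functor.map_inv]
      apply IsIso.inv_eq_of_hom_inv_id
      rw [hmap x]; simp
    simp [hinv, eqToHom_app]
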